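/- Define recursively the ideals Fin¹ := Fin on ω and Fin^{α+1} := Fin × Fin^α, an ideal on ω^{α+1} (identifying ω^{α+1} with ω × ω^α). Let X be a Polish space. Then for each positive integer α: (i) Fin^α, viewed as a subset of the space {0,1}^{ω^α} via characteristic functions, is a Σ⁰_{2α} set, and 𝓛_X(Fin^α) equals the family of all Π⁰_{2α−1} subsets of X; (ii) the Fubini product ∅×Fin^α (whose first factor is the trivial ideal {∅}) is a Π⁰_{2α+1} set, and 𝓛_X(∅×Fin^α) equals the family of all Σ⁰_{2α} subsets of X. -/

import Mathlib

open Set Topology MeasureTheory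

/-- An ideal on `Z`: a family of subsets of `Z` closed under subsets and finite unions. -/
def IsIdeal {Z : Type*} (I : Set (Set Z)) : Prop :=
  (∀ A B : Set Z, A ⊆ B → B ∈ I → A ∈ I) ∧ ∀ A B : Set Z, A ∈ I → B ∈ I → A ∪ B ∈ I

/-- An ideal is admissible if `Z ∉ I` and `I` contains all finite sets. -/
def IsAdmissible {Z : Type*} (I : Set (Set Z)) : Prop :=
  (Set.univ : Set Z) ∉ I ∧ ∀ A : Set Z, A.Finite → A ∈ I

/-- The subsequence of `x` indexed by the (infinite) set `A` converges to `η`: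
all but finitely many of the indices in `A` give values inside any neighbourhood of `η`. -/
def ConvAlong {Z X : Type*} [TopologicalSpace X] (x : Z → X) (A : Set Z) (η : X) : Prop :=
  ∀ U ∈ nhds η, {n ∈ A | x n ∉ U}.Finite

/-- The set `Λ_x(I)` of `I`-limit points of the sequence `x`. -/
def LambdaSet {Z X : Type*} [TopologicalSpace X] (x : Z → X) (I : Set (Set Z)) : Set X :=
  {η | ∃ A : Set Z, A ∉ I ∧ A.Infinite ∧ ConvAlong x A η}

/-- The family `𝓛_X(I)` of all sets of `I`-limit points of sequences in `X`, plus `∅`. -/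
def LimitFamily (Z : Type*) (X : Type*) [TopologicalSpace X] (I : Set (Set Z)) : Set (Set X) :=
  {S | ∃ x : Z → X, S = LambdaSet x I} ∪ {∅}

/-- The Fubini product of two ideals. -/
def FubiniProd {Z W : Type*} (I : Set (Set Z)) (J : Set (Set W)) : Set (Set (Z × W)) :=
  {S | {n : Z | {k : W | (n, k) ∈ S} ∉ J} ∈ I}

/-- The ideal `Fin` of finite subsets. -/
def FinIdeal (Z : Type*) : Set (Set Z) := {A : Set Z | A.Finite}

/-- Identification of a family of subsets of `Z` with a subset of the Cantor space
`Z → Bool` via characteristic functions. -/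
def chiSet {Z : Type*} (I : Set (Set Z)) : Set (Z → Bool) :=
  {f | {n : Z | f n = true} ∈ I}

/-- Finite Borel pointclasses: `SigmaClass X n` is `Σ⁰_n` for `n ≥ 1`
(`Σ⁰₁` = open sets, `Σ⁰_{n+1}` = countable unions of complements of `Σ⁰_n` sets). -/
def SigmaClass (X : Type*) [TopologicalSpace X] : ℕ → Set (Set X)
  | 0 => ∅
  | 1 => {s | IsOpen s}
  | (n + 2) => {s | ∃ f : ℕ → Set X, (∀ k, (f k)ᶜ ∈ SigmaClass X (n + 1)) ∧ s = ⋃ k, f k}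

/-- `PiClass X n` is `Π⁰_n`: complements of `Σ⁰_n` sets. -/
def PiClass (X : Type*) [TopologicalSpace X] (n : ℕ) : Set (Set X) :=
  {s | sᶜ ∈ SigmaClass X n}

/-- Baire property: differs from an open set by a meager set. -/
def HasBP {α : Type*} [TopologicalSpace α] (s : Set α) : Prop :=
  ∃ u : Set α, IsOpen u ∧ IsMeagre (symmDiff s u)

/-- Hereditary Baire property of an ideal on `ω`. -/
def HereditaryBP (I : Set (Set ℕ)) : Prop :=
  ∀ A : Set ℕ, A ∉ I → HasBP (chiSet {S : Set ℕ | ∃ T ∈ I, S = T ∩ A})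

/-- Simply analytic subset of a topological space: the projection of a Borel subset of
`X × Y` for some uncountable Polish space `Y`. -/
def SAnalytic {X : Type*} [TopologicalSpace X] (A : Set X) : Prop :=
  ∃ (Y : Type) (tY : TopologicalSpace Y), @PolishSpace Y tY ∧ ¬Countable Y ∧
    ∃ B : Set (X × Y),
      MeasurableSet[@borel (X × Y) (@instTopologicalSpaceProd X Y _ tY)] B ∧
      A = Prod.fst '' B

/-- `P⁺`-ideal. -/
def PPlusIdeal (I : Set (Set ℕ)) : Prop :=
  ∀ A : ℕ → Set ℕ, Antitone A → (∀ n, A n ∉ I) →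
    ∃ B : Set ℕ, B ∉ I ∧ ∀ n, (B \ A n).Finite

/-- `P`-ideal. -/
def PIdeal (I : Set (Set ℕ)) : Prop :=
  ∀ A : ℕ → Set ℕ, (∀ n, A n ∈ I) → ∃ B ∈ I, ∀ n, (A n \ B).Finite

/-- `L_{x↾A}`: the set of limit points of the subsequence of `x` indexed by `A`. -/
def LimSet {X : Type*} [TopologicalSpace X] (x : ℕ → X) (A : Set ℕ) : Set X :=
  {η | ∃ B ⊆ A, B.Infinite ∧ ConvAlong x B η}

/-- The ideal `I_W` attached to a sequence `x` and a set `W`. -/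
def IdealW {X : Type*} [TopologicalSpace X] (x : ℕ → X) (W : Set X) : Set (Set ℕ) :=
  {A : Set ℕ | LimSet x A ∩ W = ∅}

/-- Rudin–Blass ordering on ideals. -/
def RudinBlassLE {Z W : Type*} (I : Set (Set Z)) (J : Set (Set W)) : Prop :=
  ∃ φ : W → Z, (∀ z : Z, (φ ⁻¹' {z}).Finite) ∧ ∀ S : Set Z, S ∈ I ↔ φ ⁻¹' S ∈ J

/-- `Π⁰₃`-hardness of a subset of the Cantor space. -/
def Pi03Hard (B : Set (ℕ → Bool)) : Prop :=
  ∀ A ∈ PiClass (ℕ → Bool) 3, ∃ Φ : (ℕ → Bool) → (ℕ → Bool), Continuous Φ ∧ Φ ⁻¹' B = A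

/-- `IterProd β` is `ω^(β+1)`. -/
def IterProd : ℕ → Type
  | 0 => ℕ
  | (n + 1) => ℕ × IterProd n

/-- `FinPow β` is the ideal `Fin^(β+1)` on `ω^(β+1)`. -/
def FinPow : (n : ℕ) → Set (Set (IterProd n))
  | 0 => FinIdeal ℕ
  | (n + 1) => FubiniProd (FinIdeal ℕ) (FinPow n)

open scoped ENNReal

section ClassLemmas
variable {X : Type*} [TopologicalSpace X] {Y : Type*} [TopologicalSpace Y]

lemma memSigmaTwo {n : ℕ} {s : Set X} :
    s ∈ SigmaClass X (n+2) ↔ ∃ f : ℕ → Set X, (∀ k, f k ∈ PiClass X (n+1)) ∧ s = ⋃ k, f k :=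
  Iff.rfl

lemma memPiClass {n : ℕ} {s : Set X} : s ∈ PiClass X n ↔ sᶜ ∈ SigmaClass X n := Iff.rfl

lemma scEmptyUniv (n : ℕ) :
    (∅ : Set X) ∈ SigmaClass X (n+1) ∧ (univ : Set X) ∈ SigmaClass X (n+1) := by
  induction n with
  | zero => exact ⟨isOpen_empty, isOpen_univ⟩
  | succ n ih =>
    refine ⟨⟨fun _ => ∅, fun k => by simpa using ih.2, by simp⟩,
      ⟨fun _ => univ, fun k => by simpa using ih.1, by simp [iUnion_const]⟩⟩

lemma scEmpty (n : ℕ) : (∅ : Set X) ∈ SigmaClass X (n+1) := (scEmptyUniv n).1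
lemma scUniv (n : ℕ) : (univ : Set X) ∈ SigmaClass X (n+1) := (scEmptyUniv n).2
lemma pcEmpty (n : ℕ) : (∅ : Set X) ∈ PiClass X (n+1) := by
  rw [memPiClass, compl_empty]; exact scUniv n
lemma pcUniv (n : ℕ) : (univ : Set X) ∈ PiClass X (n+1) := by
  rw [memPiClass, compl_univ]; exact scEmpty n

lemma scIUnionPi {n : ℕ} {ι : Type*} [Encodable ι] (g : ι → Set X)
    (h : ∀ i, g i ∈ PiClass X (n+1)) : (⋃ i, g i) ∈ SigmaClass X (n+2) := by
  refine ⟨fun m => (Encodable.decode (α := ι) m).elim ∅ g, fun m => ?_, ?_⟩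
  · cases hd : Encodable.decode (α := ι) m with
    | none => simpa [hd] using (scUniv (X := X) n)
    | some i => simpa [hd] using (memPiClass.1 (h i))
  · ext x
    simp only [mem_iUnion]
    constructor
    · rintro ⟨i, hi⟩
      exact ⟨Encodable.encode i, by simp [Encodable.encodek, hi]⟩
    · rintro ⟨m, hm⟩
      cases hd : Encodable.decode (α := ι) m with
      | none => simp [hd] at hm
      | some i => rw [hd] at hm; exact ⟨i, hm⟩

lemma scPreimage {n : ℕ} {φ : Y → X} (hφ : Continuous φ) :
    ∀ {s : Set X}, s ∈ SigmaClass X (n+1) → φ ⁻¹' s ∈ SigmaClass Y (n+1) := by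
  induction n with
  | zero => exact fun hs => hs.preimage hφ
  | succ n ih =>
    rintro s ⟨f, hf, rfl⟩
    exact ⟨fun k => φ ⁻¹' f k, fun k => by rw [← preimage_compl]; exact ih (hf k),
      by rw [preimage_iUnion]⟩

lemma scIUnion {n : ℕ} (f : ℕ → Set X) (h : ∀ k, f k ∈ SigmaClass X (n+1)) :
    (⋃ k, f k) ∈ SigmaClass X (n+1) := by
  cases n with
  | zero => exact isOpen_iUnion h
  | succ n =>
    choose g hg hfg using h
    have he : (⋃ k, f k) = ⋃ p : ℕ × ℕ, g p.1 p.2 := by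
      ext x
      simp only [mem_iUnion]
      constructor
      · rintro ⟨k, hk⟩
        rw [hfg k] at hk
        obtain ⟨l, hl⟩ := mem_iUnion.1 hk
        exact ⟨⟨k, l⟩, hl⟩
      · rintro ⟨⟨k, l⟩, h⟩
        exact ⟨k, by rw [hfg k]; exact mem_iUnion.2 ⟨l, h⟩⟩
    rw [he]
    exact scIUnionPi _ fun p => hg p.1 p.2

lemma scUnion2 (n : ℕ) {s t : Set X} (hs : s ∈ SigmaClass X (n+1)) (ht : t ∈ SigmaClass X (n+1)) :
    s ∪ t ∈ SigmaClass X (n+1) := by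
  cases n with
  | zero => exact hs.union ht
  | succ n =>
    obtain ⟨f, hf, rfl⟩ := hs
    obtain ⟨g, hg, rfl⟩ := ht
    have he : (⋃ k, f k) ∪ (⋃ k, g k) = ⋃ i : ℕ ⊕ ℕ, Sum.elim f g i := by
      rw [iUnion_sum]; rfl
    rw [he]
    exact scIUnionPi _ (by rintro (i | i) <;> [exact hf i; exact hg i])

lemma scInter2 : ∀ (n : ℕ) {s t : Set X}, s ∈ SigmaClass X (n+1) → t ∈ SigmaClass X (n+1) →
    s ∩ t ∈ SigmaClass X (n+1) := by
  intro n
  induction n with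
  | zero => exact fun hs ht => hs.inter ht
  | succ n ih =>
    rintro s t ⟨f, hf, rfl⟩ ⟨g, hg, rfl⟩
    have he : (⋃ k, f k) ∩ (⋃ k, g k) = ⋃ p : ℕ × ℕ, f p.1 ∩ g p.2 := by
      ext x
      simp only [mem_iUnion, mem_inter_iff, Prod.exists]
      tauto
    rw [he]
    refine scIUnionPi _ fun p => ?_
    show (f p.1 ∩ g p.2)ᶜ ∈ SigmaClass X (n+1)
    rw [compl_inter]
    exact scUnion2 n (hf p.1) (hg p.2)

lemma pcInter2 {n : ℕ} {s t : Set X} (hs : s ∈ PiClass X (n+1)) (ht : t ∈ PiClass X (n+1)) :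
    s ∩ t ∈ PiClass X (n+1) := by
  rw [memPiClass, compl_inter]; exact scUnion2 n hs ht

lemma pcUnion2 {n : ℕ} {s t : Set X} (hs : s ∈ PiClass X (n+1)) (ht : t ∈ PiClass X (n+1)) :
    s ∪ t ∈ PiClass X (n+1) := by
  rw [memPiClass, compl_union]; exact scInter2 n hs ht

lemma pcIInterSigma {n : ℕ} {ι : Type*} [Encodable ι] (g : ι → Set X)
    (h : ∀ i, g i ∈ SigmaClass X (n+1)) : (⋂ i, g i) ∈ PiClass X (n+2) := by
  rw [memPiClass, compl_iInter]
  exact scIUnionPi _ fun i => by rw [memPiClass, compl_compl]; exact h i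

end ClassLemmas

section Acc
variable {X : Type*} [TopologicalSpace X]

/-- cumulative unions -/
def accUnion (S : ℕ → Set X) : ℕ → Set X
  | 0 => S 0
  | (k+1) => accUnion S k ∪ S (k+1)

lemma accUnion_mono (S : ℕ → Set X) : Monotone (accUnion S) := by
  apply monotone_nat_of_le_succ
  intro k
  exact subset_union_left

lemma subset_accUnion (S : ℕ → Set X) (k : ℕ) : S k ⊆ accUnion S k := by
  cases k with
  | zero => exact subset_rfl
  | succ k => exact subset_union_right

lemma iUnion_accUnion (S : ℕ → Set X) : (⋃ k, accUnion S k) = ⋃ k, S k := by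
  apply Subset.antisymm
  · refine iUnion_subset fun k => ?_
    induction k with
    | zero => exact subset_iUnion S 0
    | succ k ih => exact union_subset ih (subset_iUnion S (k+1))
  · exact iUnion_mono (subset_accUnion S)

lemma accUnion_pc {c : ℕ} {S : ℕ → Set X} (h : ∀ k, S k ∈ PiClass X (c+1)) (k : ℕ) :
    accUnion S k ∈ PiClass X (c+1) := by
  induction k with
  | zero => exact h 0
  | succ k ih => exact pcUnion2 ih (h (k+1))

/-- predecessor sets: prevSet F 0 = ∅, prevSet F (k+1) = F k -/
def prevSet (F : ℕ → Set X) : ℕ → Set X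
  | 0 => ∅
  | (k+1) => F k

lemma pf_assemble (T : Set X) (St : ℕ → Set X)
    (hmono : Monotone St) (hT : (⋃ k, St k) = T)
    (B : ℕ → ℕ → Set X) (hB : ∀ k, (⋃ l, B k l) = (prevSet St k)ᶜ)
    (hBfin : ∀ k η, {l | η ∈ B k l}.Finite) :
    (⋃ i : ℕ, St (Nat.unpair i).1 ∩ B (Nat.unpair i).1 (Nat.unpair i).2) = T ∧
      ∀ η, {i : ℕ | η ∈ St (Nat.unpair i).1 ∩ B (Nat.unpair i).1 (Nat.unpair i).2}.Finite := by
  have hsubT : ∀ i : ℕ, St (Nat.unpair i).1 ∩ B (Nat.unpair i).1 (Nat.unpair i).2 ⊆ T := by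
    intro i
    exact (inter_subset_left).trans (hT ▸ subset_iUnion St _)
  have key : ∀ η ∈ T, ∃ k₀, η ∈ St k₀ ∧ η ∉ prevSet St k₀ ∧ ∀ k l, η ∈ St k ∩ B k l → k = k₀ := by
    intro η hη
    have hex : ∃ k, η ∈ St k := by
      rw [← hT] at hη; exact mem_iUnion.1 hη
    classical
    refine ⟨Nat.find hex, Nat.find_spec hex, ?_, ?_⟩
    · cases hk : Nat.find hex with
      | zero => simp [prevSet]
      | succ k =>
        show η ∉ St k
        exact Nat.find_min hex (by omega)
    · intro k l ⟨h1, h2⟩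
      have hge : Nat.find hex ≤ k := Nat.find_min' hex h1
      have hnot : η ∉ prevSet St k := by
        have hmem : η ∈ (prevSet St k)ᶜ := by
          rw [← hB k]; exact mem_iUnion.2 ⟨l, h2⟩
        exact hmem
      rcases Nat.lt_or_ge (Nat.find hex) k with hlt | hge'
      · exfalso
        apply hnot
        cases k with
        | zero => omega
        | succ k => exact hmono (by omega : Nat.find hex ≤ k) (Nat.find_spec hex)
      · omega
  constructor
  · apply Subset.antisymm (iUnion_subset hsubT)
    intro η hη
    obtain ⟨k₀, h1, h2, _⟩ := key η hη
    have : η ∈ (prevSet St k₀)ᶜ := h2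
    rw [← hB k₀] at this
    obtain ⟨l, hl⟩ := mem_iUnion.1 this
    refine mem_iUnion.2 ⟨Nat.pair k₀ l, ?_⟩
    simp [Nat.unpair_pair]
    exact ⟨h1, hl⟩
  · intro η
    by_cases hη : η ∈ T
    · obtain ⟨k₀, _, _, huniq⟩ := key η hη
      have hsub : {i : ℕ | η ∈ St (Nat.unpair i).1 ∩ B (Nat.unpair i).1 (Nat.unpair i).2} ⊆
          (fun l => Nat.pair k₀ l) '' {l | η ∈ B k₀ l} := by
        intro i hi
        have hk : (Nat.unpair i).1 = k₀ := huniq _ _ hi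
        refine ⟨(Nat.unpair i).2, ?_, ?_⟩
        · rw [← hk]; exact hi.2
        · rw [← hk]; exact (Nat.pair_unpair i)
      exact Finite.subset (Finite.image _ (hBfin k₀ η)) hsub
    · have : {i : ℕ | η ∈ St (Nat.unpair i).1 ∩ B (Nat.unpair i).1 (Nat.unpair i).2} = ∅ := by
        ext i; simp only [mem_setOf_eq, mem_empty_iff_false, iff_false]
        exact fun hc => hη (hsubT i hc)
      rw [this]; exact finite_empty
end Acc

section MetricClass
variable {X : Type*} [MetricSpace X]

lemma scOfOpen : ∀ (n : ℕ) (s : Set X), IsOpen s → s ∈ SigmaClass X (n+1)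
  | 0, s, hs => hs
  | (n+1), s, hs => by
    obtain ⟨F, hFc, _, hFU, _⟩ := hs.exists_iUnion_isClosed
    exact ⟨F, fun k => scOfOpen n _ (hFc k).isOpen_compl, hFU.symm⟩

lemma pcOfClosed (n : ℕ) {s : Set X} (hs : IsClosed s) : s ∈ PiClass X (n+1) :=
  memPiClass.2 (scOfOpen n _ hs.isOpen_compl)

lemma scMono : ∀ (n : ℕ) {s : Set X}, s ∈ SigmaClass X (n+1) → s ∈ SigmaClass X (n+2)
  | 0, s, hs => scOfOpen 1 s hs
  | (n+1), s, hs => by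
    obtain ⟨f, hf, rfl⟩ := hs
    exact ⟨f, fun k => scMono n (hf k), rfl⟩

lemma scMonoLe {n m : ℕ} (h : n ≤ m) {s : Set X} (hs : s ∈ SigmaClass X (n+1)) :
    s ∈ SigmaClass X (m+1) := by
  induction m with
  | zero => exact (by omega : n = 0) ▸ hs
  | succ m ih =>
    rcases Nat.lt_or_ge n (m+1) with h' | h'
    · exact scMono m (ih (by omega))
    · have : n = m+1 := by omega
      exact this ▸ hs

lemma pcMonoLe {n m : ℕ} (h : n ≤ m) {s : Set X} (hs : s ∈ PiClass X (n+1)) :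
    s ∈ PiClass X (m+1) := memPiClass.2 (scMonoLe h (memPiClass.1 hs))

/-- point-finite decomposition of an open set into closed "bands" -/
lemma pfOpen {U : Set X} (hU : IsOpen U) :
    ∃ P : ℕ → Set X, (∀ l, IsClosed (P l)) ∧ (⋃ l, P l) = U ∧ ∀ η, {l | η ∈ P l}.Finite := by
  classical
  set d : X → ℝ≥0∞ := fun x => EMetric.infEdist x Uᶜ with hd
  have hdc : Continuous d := EMetric.continuous_infEdist
  set P : ℕ → Set X := fun l => d ⁻¹' Icc (((l:ℝ≥0∞)+1))⁻¹ ((l:ℝ≥0∞))⁻¹ with hP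
  have hdpos : ∀ x, x ∈ U ↔ d x ≠ 0 := by
    intro x
    rw [hd]
    simp only [ne_eq]
    show x ∈ U ↔ ¬Metric.infEDist x Uᶜ = 0
    rw [← Metric.mem_closure_iff_infEDist_zero, hU.isClosed_compl.closure_eq]
    simp
  have hPsub : ∀ l, P l ⊆ U := by
    intro l x hx
    rw [hdpos]
    intro h0
    have h1 : (((l:ℝ≥0∞)+1))⁻¹ = 0 := le_antisymm (by rw [← h0]; exact hx.1) zero_le
    rw [ENNReal.inv_eq_zero] at h1
    exact absurd h1 (by simp)
  refine ⟨P, fun l => (isClosed_Icc).preimage hdc, ?_, ?_⟩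
  · apply Subset.antisymm (iUnion_subset hPsub)
    intro x hx
    have h0 : d x ≠ 0 := (hdpos x).1 hx
    have hex : ∃ l : ℕ, (((l:ℝ≥0∞)+1))⁻¹ ≤ d x := by
      obtain ⟨m, hm⟩ := ENNReal.exists_inv_nat_lt h0
      refine ⟨m, le_trans ?_ hm.le⟩
      exact ENNReal.inv_le_inv.2 (by
        exact le_self_add)
    set l₀ := Nat.find hex with hl₀
    refine mem_iUnion.2 ⟨l₀, Nat.find_spec hex, ?_⟩
    cases hc : l₀ with
    | zero => simp
    | succ l =>
      have : ¬ (((l:ℝ≥0∞)+1))⁻¹ ≤ d x := Nat.find_min hex (by omega)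
      push_neg at this
      rw [Nat.cast_succ]
      exact this.le
  · intro x
    by_cases hx : x ∈ U
    · have h0 : d x ≠ 0 := (hdpos x).1 hx
      obtain ⟨m, hm⟩ := ENNReal.exists_inv_nat_lt h0
      refine Finite.subset (finite_Iio (m+1)) ?_
      intro l hl
      simp only [mem_Iio]
      by_contra hge
      push_neg at hge
      have h1 : d x ≤ ((l:ℝ≥0∞))⁻¹ := hl.2
      have h2 : ((l:ℝ≥0∞))⁻¹ ≤ ((m:ℝ≥0∞))⁻¹ :=
        ENNReal.inv_le_inv.2 (by exact_mod_cast Nat.le_of_succ_le hge)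
      exact absurd (h1.trans h2) (not_le.2 hm)
    · have : {l | x ∈ P l} = ∅ := by
        ext l; simp only [mem_setOf_eq, mem_empty_iff_false, iff_false]
        exact fun hc => hx (hPsub l hc)
      rw [this]; exact finite_empty

/-- point-finite decomposition of Σ⁰_{c+2} sets into Π⁰_{c+1} pieces -/
lemma pfSigma : ∀ (c : ℕ) (T : Set X), T ∈ SigmaClass X (c+2) →
    ∃ P : ℕ → Set X, (∀ k, P k ∈ PiClass X (c+1)) ∧ (⋃ k, P k) = T ∧
      ∀ η, {k | η ∈ P k}.Finite := by
  intro c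
  induction c with
  | zero =>
    rintro T hT
    obtain ⟨S, hS, rfl⟩ := memSigmaTwo.1 hT
    have hScl : ∀ k, IsClosed (accUnion S k) := by
      intro k
      induction k with
      | zero =>
        have := hS 0
        rw [memPiClass] at this
        exact isOpen_compl_iff.1 this
      | succ k ih =>
        exact ih.union (isOpen_compl_iff.1 (memPiClass.1 (hS (k+1))))
    have hprevopen : ∀ k, IsOpen (prevSet (accUnion S) k)ᶜ := by
      intro k
      cases k with
      | zero => simp [prevSet]
      | succ k => exact (hScl k).isOpen_compl
    choose B hBcl hBU hBfin using fun k => pfOpen (hprevopen k)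
    obtain ⟨hU, hfin⟩ := pf_assemble (⋃ k, S k) (accUnion S) (accUnion_mono S)
      (iUnion_accUnion S) B hBU hBfin
    exact ⟨_, fun i => pcOfClosed 0 ((hScl _).inter (hBcl _ _)), hU, hfin⟩
  | succ c ih =>
    rintro T hT
    obtain ⟨S, hS, rfl⟩ := memSigmaTwo.1 hT
    have hSt : ∀ k, accUnion S k ∈ PiClass X (c+2) := accUnion_pc hS
    have hprevsc : ∀ k, (prevSet (accUnion S) k)ᶜ ∈ SigmaClass X (c+2) := by
      intro k
      cases k with
      | zero => simpa [prevSet] using scUniv (X := X) (c+1)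
      | succ k => exact memPiClass.1 (hSt k)
    choose B hBpc hBU hBfin using fun k => ih _ (hprevsc k)
    obtain ⟨hU, hfin⟩ := pf_assemble (⋃ k, S k) (accUnion S) (accUnion_mono S)
      (iUnion_accUnion S) B hBU hBfin
    exact ⟨_, fun i => pcInter2 (hSt _) (pcMonoLe (by omega) (hBpc _ _)), hU, hfin⟩
end MetricClass

def limsupSet {X : Type*} (F : ℕ → Set X) : Set X := {η | {n | η ∈ F n}.Infinite}

lemma mem_limsupSet_iff {X : Type*} {F : ℕ → Set X} {η : X} :
    η ∈ limsupSet F ↔ ∀ m, ∃ n ≥ m, η ∈ F n := by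
  rw [limsupSet, mem_setOf_eq, ← Nat.frequently_atTop_iff_infinite, Filter.frequently_atTop]

section Limsup
variable {X : Type*} [TopologicalSpace X]

lemma limsupSet_pc {c : ℕ} (F : ℕ → Set X) (h : ∀ n, F n ∈ PiClass X (c+1)) :
    limsupSet F ∈ PiClass X (c+3) := by
  classical
  have he : limsupSet F = ⋂ m, ⋃ n, (if m ≤ n then F n else ∅) := by
    ext η
    rw [mem_limsupSet_iff]
    simp only [mem_iInter, mem_iUnion]
    constructor
    · intro hm m
      obtain ⟨n, hn, hFn⟩ := hm m
      exact ⟨n, by simp [hn, hFn]⟩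
    · intro hm m
      obtain ⟨n, hn⟩ := hm m
      by_cases hc : m ≤ n
      · exact ⟨n, hc, by simpa [hc] using hn⟩
      · simp [hc] at hn
  rw [he]
  refine pcIInterSigma _ fun m => scIUnionPi _ fun n => ?_
  by_cases hc : m ≤ n
  · simpa [hc] using h n
  · simpa [hc] using pcEmpty (X := X) c

/-- cumulative intersections -/
def accInter (S : ℕ → Set X) : ℕ → Set X
  | 0 => S 0
  | (k+1) => accInter S k ∩ S (k+1)

lemma accInter_anti (S : ℕ → Set X) : Antitone (accInter S) :=
  antitone_nat_of_succ_le fun k => inter_subset_left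

lemma accInter_subset (S : ℕ → Set X) {j m : ℕ} (h : j ≤ m) : accInter S m ⊆ S j := by
  have h2 : accInter S m ⊆ accInter S j := accInter_anti S h
  refine h2.trans ?_
  cases j with
  | zero => exact subset_rfl
  | succ j => exact inter_subset_right

lemma mem_accInter {S : ℕ → Set X} {η : X} {m : ℕ} (h : ∀ j, η ∈ S j) : η ∈ accInter S m := by
  induction m with
  | zero => exact h 0
  | succ m ih => exact ⟨ih, h (m+1)⟩

end Limsup

lemma pc_eq_limsup {X : Type*} [MetricSpace X] {c : ℕ} {D : Set X} (hD : D ∈ PiClass X (c+3)) :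
    ∃ F : ℕ → Set X, (∀ n, F n ∈ PiClass X (c+1)) ∧ D = limsupSet F := by
  classical
  obtain ⟨g, hg, hDc⟩ := memSigmaTwo.1 (memPiClass.1 hD)
  set T : ℕ → Set X := fun m => (g m)ᶜ with hTdef
  have hT : ∀ m, T m ∈ SigmaClass X (c+2) := fun m => memPiClass.1 (hg m)
  have hDT : D = ⋂ m, T m := by
    have : Dᶜᶜ = (⋃ k, g k)ᶜ := by rw [← hDc]
    rwa [compl_compl, compl_iUnion] at this
  have hT' : ∀ m, accInter T m ∈ SigmaClass X (c+2) := by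
    intro m
    induction m with
    | zero => exact hT 0
    | succ m ih => exact scInter2 _ ih (hT (m+1))
  choose P hPpc hPU hPfin using fun m => pfSigma c _ (hT' m)
  refine ⟨fun i => P (Nat.unpair i).1 (Nat.unpair i).2, fun i => hPpc _ _, ?_⟩
  ext η
  constructor
  · intro hη
    have hηT : ∀ j, η ∈ T j := by
      intro j
      exact mem_iInter.1 (hDT ▸ hη) j
    have hex : ∀ m, ∃ k, η ∈ P m k := by
      intro m
      have : η ∈ accInter T m := mem_accInter hηT
      rw [← hPU m] at this
      exact mem_iUnion.1 this
    choose k hk using hex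
    refine Set.infinite_of_injective_forall_mem (f := fun m => Nat.pair m (k m)) ?_ ?_
    · intro a b hab
      have := congrArg (fun i => (Nat.unpair i).1) hab
      simpa [Nat.unpair_pair] using this
    · intro m
      simp only [mem_setOf_eq, Nat.unpair_pair]
      exact hk m
  · intro hη
    by_contra hD'
    have hm₀ : ∃ m₀, η ∉ T m₀ := by
      by_contra hc
      push_neg at hc
      exact hD' (hDT ▸ mem_iInter.2 hc)
    obtain ⟨m₀, hm₀⟩ := hm₀
    have hsub : {i : ℕ | η ∈ P (Nat.unpair i).1 (Nat.unpair i).2} ⊆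
        ⋃ m ∈ Iio m₀, (fun k => Nat.pair m k) '' {k | η ∈ P m k} := by
      intro i hi
      have hmem : η ∈ accInter T (Nat.unpair i).1 := by
        have : η ∈ ⋃ k, P (Nat.unpair i).1 k := mem_iUnion.2 ⟨(Nat.unpair i).2, hi⟩
        rwa [hPU] at this
      have hlt : (Nat.unpair i).1 < m₀ := by
        by_contra hge
        push_neg at hge
        exact hm₀ (accInter_subset T hge hmem)
      exact mem_biUnion hlt ⟨(Nat.unpair i).2, hi, Nat.pair_unpair i⟩
    have hfin : ({i : ℕ | η ∈ P (Nat.unpair i).1 (Nat.unpair i).2}).Finite := by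
      refine Finite.subset ?_ hsub
      exact Set.Finite.biUnion (finite_Iio m₀) fun m _ => Finite.image _ (hPfin m η)
    exact hη hfin

/-! ### basic properties of FinPow -/

lemma finPow_subset_mem : ∀ (β : ℕ) {A B : Set (IterProd β)}, A ⊆ B → B ∈ FinPow β → A ∈ FinPow β
  | 0, A, B, hAB, hB => Set.Finite.subset hB hAB
  | (β+1), A, B, hAB, hB => by
    refine Set.Finite.subset hB fun n hn => ?_
    simp only [mem_setOf_eq] at hn ⊢
    intro hc
    exact hn (finPow_subset_mem β (fun k hk => hAB hk) hc)

lemma finPow_union_mem : ∀ (β : ℕ) {A B : Set (IterProd β)},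
    A ∈ FinPow β → B ∈ FinPow β → A ∪ B ∈ FinPow β
  | 0, A, B, hA, hB => Set.Finite.union hA hB
  | (β+1), A, B, hA, hB => by
    refine Set.Finite.subset (Set.Finite.union hA hB) fun n hn => ?_
    simp only [mem_setOf_eq, mem_union]
    by_contra hc
    push_neg at hc
    refine hn ?_
    show ({k | (n,k) ∈ A} ∪ {k | (n,k) ∈ B}) ∈ FinPow β
    exact finPow_union_mem β hc.1 hc.2

lemma finPow_finite_mem : ∀ (β : ℕ) {A : Set (IterProd β)}, A.Finite → A ∈ FinPow β
  | 0, A, hA => hA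
  | (β+1), A, hA => by
    have hfib : ∀ n, {k | (n, k) ∈ A} ∈ FinPow β := by
      intro n
      refine finPow_finite_mem β ?_
      have : {k | (n, k) ∈ A} ⊆ (fun k => ((n, k) : IterProd (β+1))) ⁻¹' A := fun k hk => hk
      refine Finite.subset (Set.Finite.preimage (f := fun k => ((n, k) : IterProd (β+1))) (fun a _ b _ h => congrArg Prod.snd h) hA) this
    have : {n : ℕ | {k | (n, k) ∈ A} ∉ FinPow β} = ∅ :=
      eq_empty_iff_forall_notMem.2 fun n hn => hn (hfib n)
    show Set.Finite _
    exact (congrArg Set.Finite this).mpr finite_empty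

lemma iterProd_infinite : ∀ β, Infinite (IterProd β)
  | 0 => (inferInstance : Infinite ℕ)
  | (β+1) => by
    haveI := iterProd_infinite β
    exact (inferInstance : Infinite (ℕ × IterProd β))

lemma finPow_univ_not_mem : ∀ β, (univ : Set (IterProd β)) ∉ FinPow β
  | 0 => by
    haveI := iterProd_infinite 0
    exact fun hc => infinite_univ hc
  | (β+1) => by
    intro hc
    have : {n : ℕ | {k | (n, k) ∈ (univ : Set (IterProd (β+1)))} ∉ FinPow β} = univ := by
      refine eq_univ_of_forall fun n => ?_
      have : {k | ((n, k) : IterProd (β+1)) ∈ univ} = univ := by ext k; simp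
      simp only [mem_setOf_eq, this]
      exact finPow_univ_not_mem β
    have hc2 : {n : ℕ | {k | (n, k) ∈ (univ : Set (IterProd (β+1)))} ∉ FinPow β} ∈ FinIdeal ℕ := hc
    rw [this] at hc2
    have hc := hc2
    exact infinite_univ hc

lemma finPow_not_mem_infinite {β : ℕ} {A : Set (IterProd β)} (hA : A ∉ FinPow β) : A.Infinite :=
  fun hc => hA (finPow_finite_mem β hc)

lemma finPow_diff_not_mem {β : ℕ} {A s : Set (IterProd β)} (hA : A ∉ FinPow β) (hs : s.Finite) :
    A \ s ∉ FinPow β := by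
  intro hc
  exact hA (finPow_subset_mem β (fun k hk => by
    by_cases h : k ∈ s
    · exact mem_union_right _ h
    · exact mem_union_left _ ⟨hk, h⟩) (finPow_union_mem β hc (finPow_finite_mem β hs)))

/-! ### Lambda sets of Fubini products -/

section Fubini
variable {X : Type*} [TopologicalSpace X]

lemma convAlong_fiber {Z : Type*} (x : ℕ × Z → X) (A : Set (ℕ × Z)) (η : X) (n : ℕ)
    (h : ConvAlong x A η) : ConvAlong (fun k => x (n, k)) {k | (n, k) ∈ A} η := by
  intro U hU
  have hfin := h U hU
  have hsub : {k ∈ {k | (n, k) ∈ A} | x (n, k) ∉ U} ⊆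
      (fun k => ((n, k) : ℕ × Z)) ⁻¹' {p ∈ A | x p ∉ U} := fun k hk => hk
  exact Finite.subset (Set.Finite.preimage (fun a _ b _ h => congrArg Prod.snd h) hfin) hsub

/-- Λ_x(∅ × J) is the union of the Λ-sets of the rows. -/
lemma lambdaSet_emptyProd {Z : Type*} (J : Set (Set Z))
    (hJfin : ∀ s : Set Z, s.Finite → s ∈ J) (x : ℕ × Z → X) :
    LambdaSet x (FubiniProd ({∅} : Set (Set ℕ)) J) = ⋃ n, LambdaSet (fun k => x (n, k)) J := by
  ext η
  simp only [mem_iUnion]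
  constructor
  · rintro ⟨A, hA, -, hconv⟩
    have hne : {n : ℕ | {k | (n, k) ∈ A} ∉ J} ≠ ∅ := fun hc => hA hc
    obtain ⟨n, hn⟩ := nonempty_iff_ne_empty.2 hne
    refine ⟨n, {k | (n, k) ∈ A}, hn, ?_, convAlong_fiber x A η n hconv⟩
    exact fun hfin => hn (hJfin _ hfin)
  · rintro ⟨n, A', hA', hA'inf, hconv⟩
    refine ⟨(fun k => ((n, k) : ℕ × Z)) '' A', ?_, ?_, ?_⟩
    · intro hc
      have hc2 : {m : ℕ | {k | (m, k) ∈ (fun k => ((n, k) : ℕ × Z)) '' A'} ∉ J} = ∅ := hc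
      have hfib : {k | (n, k) ∈ (fun k => ((n, k) : ℕ × Z)) '' A'} = A' := by
        ext k
        constructor
        · rintro ⟨k', hk', hkeq⟩
          have : k' = k := congrArg Prod.snd hkeq
          exact this ▸ hk'
        · intro hk; exact ⟨k, hk, rfl⟩
      have : n ∈ {m : ℕ | {k | (m, k) ∈ (fun k => ((n, k) : ℕ × Z)) '' A'} ∉ J} := by
        simp only [mem_setOf_eq, hfib]
        exact hA'
      rw [hc2] at this
      exact this
    · exact Set.Infinite.image (fun a _ b _ h => congrArg Prod.snd h) hA'inf
    · intro U hU
      have hfin := hconv U hU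
      have hsub : {p ∈ (fun k => ((n, k) : ℕ × Z)) '' A' | x p ∉ U} ⊆
          (fun k => ((n, k) : ℕ × Z)) '' {k ∈ A' | x (n, k) ∉ U} := by
        rintro p ⟨⟨k, hk, rfl⟩, hpU⟩
        exact ⟨k, ⟨hk, hpU⟩, rfl⟩
      exact Finite.subset (Finite.image _ hfin) hsub

/-- Λ_x(Fin × J) is the limsup of the Λ-sets of the rows. -/
lemma lambdaSet_finProd {Z : Type*} [FirstCountableTopology X] (J : Set (Set Z))
    (hJsub : ∀ A B : Set Z, A ⊆ B → B ∈ J → A ∈ J)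
    (hJun : ∀ A B : Set Z, A ∈ J → B ∈ J → A ∪ B ∈ J)
    (hJfin : ∀ s : Set Z, s.Finite → s ∈ J) (x : ℕ × Z → X) :
    LambdaSet x (FubiniProd (FinIdeal ℕ) J) = limsupSet (fun n => LambdaSet (fun k => x (n, k)) J) := by
  classical
  ext η
  constructor
  · rintro ⟨A, hA, -, hconv⟩
    have hNinf : {n : ℕ | {k | (n, k) ∈ A} ∉ J}.Infinite := hA
    refine Set.Infinite.mono ?_ hNinf
    intro n hn
    refine ⟨{k | (n, k) ∈ A}, hn, ?_, convAlong_fiber x A η n hconv⟩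
    exact fun hfin => hn (hJfin _ hfin)
  · intro hη
    have hNinf : {n : ℕ | η ∈ LambdaSet (fun k => x (n, k)) J}.Infinite := hη
    obtain ⟨U, hU⟩ := (nhds η).exists_antitone_basis
    have hUmem : ∀ m, U m ∈ nhds η := fun m => hU.toHasBasis.mem_of_mem trivial
    have main : ∀ n : ℕ, ∃ B : Set Z,
        ((η ∈ LambdaSet (fun k => x (n, k)) J) → B ∉ J) ∧
        (∀ k ∈ B, ∀ m ≤ n, x (n, k) ∈ U m) ∧
        (∀ m, {k ∈ B | x (n, k) ∉ U m}.Finite) ∧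
        ((η ∉ LambdaSet (fun k => x (n, k)) J) → B = ∅) := by
      intro n
      by_cases h : η ∈ LambdaSet (fun k => x (n, k)) J
      · obtain ⟨A', hA'J, -, hconv⟩ := id h
        set E : Set Z := ⋃ m ∈ Iio (n+1), {k ∈ A' | x (n, k) ∉ U m} with hE
        have hEfin : E.Finite :=
          Set.Finite.biUnion (finite_Iio (n+1)) fun m _ => hconv (U m) (hUmem m)
        refine ⟨A' \ E, fun _ => ?_, ?_, ?_, fun hc => absurd h hc⟩
        · intro hc
          refine hA'J (hJsub _ ((A' \ E) ∪ E) (fun k hk => ?_) (hJun _ _ hc (hJfin _ hEfin)))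
          by_cases hkE : k ∈ E
          · exact mem_union_right _ hkE
          · exact mem_union_left _ ⟨hk, hkE⟩
        · rintro k ⟨hkA', hkE⟩ m hm
          by_contra hc
          exact hkE (mem_biUnion (by simpa using Nat.lt_succ_of_le hm) ⟨hkA', hc⟩)
        · intro m
          refine Finite.subset (hconv (U m) (hUmem m)) ?_
          rintro k ⟨⟨hkA', -⟩, hkU⟩
          exact ⟨hkA', hkU⟩
      · exact ⟨∅, fun hc => absurd hc h, by simp, by simp, fun _ => rfl⟩
    choose B hB1 hB2 hB3 hB4 using main
    refine ⟨{p : ℕ × Z | p.2 ∈ B p.1}, ?_, ?_, ?_⟩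
    · intro hc
      have hfib : ∀ n, {k | ((n, k) : ℕ × Z) ∈ {p : ℕ × Z | p.2 ∈ B p.1}} = B n := fun n => rfl
      have hcf : {n : ℕ | B n ∉ J}.Finite := by
        have : {n : ℕ | {k | ((n,k) : ℕ × Z) ∈ {p : ℕ × Z | p.2 ∈ B p.1}} ∉ J} ∈ FinIdeal ℕ := hc
        simpa [hfib, FinIdeal] using this
      exact Set.Infinite.mono (fun n hn => hB1 n hn) hNinf hcf
    · intro hfin
      have himg : {n : ℕ | η ∈ LambdaSet (fun k => x (n, k)) J} ⊆
          Prod.fst '' {p : ℕ × Z | p.2 ∈ B p.1} := by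
        intro n hn
        have hBn : B n ∉ J := hB1 n hn
        have hBne : B n ≠ ∅ := fun hc => hBn (hc ▸ hJfin ∅ finite_empty)
        obtain ⟨k, hk⟩ := nonempty_iff_ne_empty.2 hBne
        exact ⟨(n, k), hk, rfl⟩
      exact hNinf (Finite.subset (Finite.image _ hfin) himg)
    · intro V hV
      obtain ⟨m, -, hm⟩ := hU.toHasBasis.mem_iff.1 hV
      have hsub : {p ∈ {p : ℕ × Z | p.2 ∈ B p.1} | x p ∉ V} ⊆
          ⋃ n ∈ Iio m, (fun k => ((n, k) : ℕ × Z)) '' {k ∈ B n | x (n, k) ∉ U m} := by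
        rintro ⟨n, k⟩ ⟨hkB, hpV⟩
        have hnm : n < m := by
          by_contra hge
          push_neg at hge
          exact hpV (hm (hB2 n k hkB m hge))
        exact mem_biUnion hnm ⟨k, ⟨hkB, fun hc => hpV (hm hc)⟩, rfl⟩
      refine Finite.subset (Set.Finite.biUnion (finite_Iio m) fun n _ => ?_) hsub
      exact Finite.image _ (hB3 n m)

end Fubini

/-! ### base case: the Fin ideal on ℕ -/

section Base
variable {X : Type*} [TopologicalSpace X]

lemma lambdaSet_fin [FirstCountableTopology X] (x : ℕ → X) :
    LambdaSet x (FinIdeal ℕ) = {η | ∀ U ∈ nhds η, {n | x n ∈ U}.Infinite} := by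
  classical
  ext η
  constructor
  · rintro ⟨A, hA, -, hconv⟩ U hU
    have hAinf : A.Infinite := hA
    have hsub : A \ {n ∈ A | x n ∉ U} ⊆ {n | x n ∈ U} := by
      rintro n ⟨hnA, hn⟩
      by_contra hc
      exact hn ⟨hnA, hc⟩
    exact Set.Infinite.mono hsub (Set.Infinite.diff hAinf (hconv U hU))
  · intro hη
    obtain ⟨U, hU⟩ := (nhds η).exists_antitone_basis
    have hUmem : ∀ m, U m ∈ nhds η := fun m => hU.toHasBasis.mem_of_mem trivial
    have hstep : ∀ (m b : ℕ), ∃ n, b < n ∧ x n ∈ U m := by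
      intro m b
      obtain ⟨n, hn, hbn⟩ := Set.Infinite.exists_gt (hη (U m) (hUmem m)) b
      exact ⟨n, hbn, hn⟩
    choose g hg1 hg2 using hstep
    set f : ℕ → ℕ := fun m => Nat.rec (g 0 0) (fun m fm => g (m+1) fm) m with hf
    have hfmem : ∀ m, x (f m) ∈ U m := by
      intro m
      cases m with
      | zero => exact hg2 0 0
      | succ m => exact hg2 (m+1) (f m)
    have hfmono : StrictMono f := by
      apply strictMono_nat_of_lt_succ
      intro m
      exact hg1 (m+1) (f m)
    refine ⟨range f, ?_, ?_, ?_⟩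
    · exact fun hc => Set.infinite_range_of_injective hfmono.injective hc
    · exact Set.infinite_range_of_injective hfmono.injective
    · intro V hV
      obtain ⟨m₀, -, hm₀⟩ := hU.toHasBasis.mem_iff.1 hV
      have hsub : {n ∈ range f | x n ∉ V} ⊆ f '' (Iio m₀) := by
        rintro n ⟨⟨m, rfl⟩, hnV⟩
        refine ⟨m, ?_, rfl⟩
        by_contra hge
        simp only [mem_Iio, not_lt] at hge
        exact hnV (hm₀ (hU.antitone (by simpa using hge) (hfmem m)))
      exact Finite.subset (Finite.image _ (finite_Iio m₀)) hsub

lemma lambdaSet_fin_closed [FirstCountableTopology X] (x : ℕ → X) :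
    IsClosed (LambdaSet x (FinIdeal ℕ)) := by
  rw [lambdaSet_fin]
  rw [← isOpen_compl_iff]
  rw [isOpen_iff_mem_nhds]
  intro η hη
  simp only [mem_compl_iff, mem_setOf_eq, not_forall] at hη
  obtain ⟨U, hU, hfin⟩ := hη
  rw [Set.not_infinite] at hfin
  have hint : interior U ∈ nhds η := interior_mem_nhds.2 hU
  refine Filter.mem_of_superset hint ?_
  intro η' hη'
  simp only [mem_compl_iff, mem_setOf_eq, not_forall]
  refine ⟨U, ?_, by rw [Set.not_infinite]; exact hfin⟩
  exact Filter.mem_of_superset (isOpen_interior.mem_nhds hη') interior_subset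

end Base

section Realize
variable {X : Type*} [TopologicalSpace X] [PolishSpace X]

lemma closed_realizable {C : Set X} (hC : IsClosed C) (hne : C.Nonempty) :
    ∃ x : ℕ → X, LambdaSet x (FinIdeal ℕ) = C := by
  classical
  haveI : PolishSpace ↥C := hC.polishSpace
  haveI : Nonempty ↥C := hne.to_subtype
  obtain ⟨s, hsc, hsd⟩ := TopologicalSpace.exists_countable_dense ↥C
  have hsne : s.Nonempty := hsd.nonempty
  obtain ⟨g, hgs⟩ := hsc.exists_eq_range hsne
  set x : ℕ → X := fun n => (g (Nat.unpair n).1 : X) with hx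
  refine ⟨x, ?_⟩
  rw [lambdaSet_fin]
  ext η
  constructor
  · intro hη
    have hcl : η ∈ closure C := by
      rw [mem_closure_iff_nhds]
      intro U hU
      obtain ⟨n, hn⟩ := (hη U hU).nonempty
      exact ⟨x n, hn, (g (Nat.unpair n).1).2⟩
    rwa [hC.closure_eq] at hcl
  · intro hη U hU
    have hpre : (Subtype.val ⁻¹' U : Set ↥C) ∈ nhds (⟨η, hη⟩ : ↥C) :=
      (continuous_subtype_val.continuousAt).preimage_mem_nhds hU
    have hmem : (⟨η, hη⟩ : ↥C) ∈ closure s := by rw [hsd.closure_eq]; exact mem_univ _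
    obtain ⟨c, hcU, hcs⟩ := mem_closure_iff_nhds.1 hmem _ hpre
    obtain ⟨k, rfl⟩ : ∃ k, g k = c := by
      rw [hgs] at hcs
      exact hcs
    refine Set.infinite_of_injective_forall_mem (f := fun m => Nat.pair k m) ?_ ?_
    · intro a b hab
      have := congrArg (fun i => (Nat.unpair i).2) hab
      simpa [Nat.unpair_pair] using this
    · intro m
      simp only [mem_setOf_eq, hx, Nat.unpair_pair]
      exact hcU

end Realize

section Chi

lemma chiSet_finIdeal_sigma2 : chiSet (FinIdeal ℕ) ∈ SigmaClass (ℕ → Bool) 2 := by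
  classical
  have he : chiSet (FinIdeal ℕ) =
      ⋃ F : Finset ℕ, ⋂ n : ℕ, (if n ∈ F then univ else {f : ℕ → Bool | f n = false}) := by
    ext f
    simp only [chiSet, mem_setOf_eq, mem_iUnion, mem_iInter]
    constructor
    · intro hfin
      have hfin' : Set.Finite {n : ℕ | f n = true} := hfin
      refine ⟨hfin'.toFinset, fun n => ?_⟩
      by_cases hn : n ∈ hfin'.toFinset
      · rw [if_pos hn]; exact mem_univ _
      · rw [if_neg hn]
        rw [Set.Finite.mem_toFinset, mem_setOf_eq] at hn
        simpa using hn
    · rintro ⟨F, hF⟩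
      refine Set.Finite.subset F.finite_toSet fun n hn => ?_
      by_contra hnF
      have h2 := hF n
      rw [if_neg (by simpa using hnF)] at h2
      rw [mem_setOf_eq] at h2 hn
      rw [hn] at h2
      exact absurd h2 (by simp)
  rw [he]
  refine scIUnionPi (n := 0) _ fun F => ?_
  rw [memPiClass]
  have hcl : IsClosed (⋂ n : ℕ, (if n ∈ F then univ else {f : ℕ → Bool | f n = false})) := by
    refine isClosed_iInter fun n => ?_
    by_cases hn : n ∈ F
    · rw [if_pos hn]; exact isClosed_univ
    · rw [if_neg hn]
      exact IsClosed.preimage (continuous_apply (A := fun _ : ℕ => Bool) n) (isClosed_discrete {false})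
  exact hcl.isOpen_compl

lemma chiSet_fubiniFin {W : Type*} (J : Set (Set W)) (c : ℕ)
    (hJ : chiSet J ∈ SigmaClass (W → Bool) (c+2)) :
    chiSet (FubiniProd (FinIdeal ℕ) J) ∈ SigmaClass ((ℕ × W) → Bool) (c+4) := by
  classical
  set res : ℕ → ((ℕ × W) → Bool) → (W → Bool) := fun n g k => g (n, k) with hres
  have hrescont : ∀ n, Continuous (res n) :=
    fun n => continuous_pi fun k => continuous_apply (n, k)
  have he : chiSet (FubiniProd (FinIdeal ℕ) J) =
      ⋃ F : Finset ℕ, ⋂ n : ℕ, (if n ∈ F then univ else res n ⁻¹' chiSet J) := by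
    ext g
    simp only [mem_iUnion, mem_iInter]
    constructor
    · intro hfin
      have hfin' : Set.Finite {n : ℕ | {k : W | g (n, k) = true} ∉ J} := hfin
      refine ⟨hfin'.toFinset, fun n => ?_⟩
      by_cases hn : n ∈ hfin'.toFinset
      · rw [if_pos hn]; exact mem_univ _
      · rw [if_neg hn]
        rw [Set.Finite.mem_toFinset, mem_setOf_eq, not_not] at hn
        exact hn
    · rintro ⟨F, hF⟩
      show Set.Finite _
      refine Set.Finite.subset F.finite_toSet fun n hn => ?_
      by_contra hnF
      have h2 := hF n
      rw [if_neg (by simpa using hnF)] at h2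
      exact hn h2
  rw [he]
  refine scIUnionPi (n := c+2) _ fun F => ?_
  have : (⋂ n : ℕ, (if n ∈ F then univ else res n ⁻¹' chiSet J)) ∈
      PiClass ((ℕ × W) → Bool) ((c+1)+2) := by
    refine pcIInterSigma _ fun n => ?_
    by_cases hn : n ∈ F
    · rw [if_pos hn]; exact scUniv (c+1)
    · rw [if_neg hn]; exact scPreimage (hrescont n) hJ
  exact this

lemma chiSet_fubiniEmpty {W : Type*} (J : Set (Set W)) (c : ℕ)
    (hJ : chiSet J ∈ SigmaClass (W → Bool) (c+2)) :
    chiSet (FubiniProd ({∅} : Set (Set ℕ)) J) ∈ PiClass ((ℕ × W) → Bool) (c+3) := by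
  classical
  set res : ℕ → ((ℕ × W) → Bool) → (W → Bool) := fun n g k => g (n, k) with hres
  have hrescont : ∀ n, Continuous (res n) :=
    fun n => continuous_pi fun k => continuous_apply (n, k)
  have he : chiSet (FubiniProd ({∅} : Set (Set ℕ)) J) = ⋂ n : ℕ, res n ⁻¹' chiSet J := by
    ext g
    simp only [mem_iInter]
    constructor
    · intro h n
      have h2 : {n : ℕ | {k : W | g (n, k) = true} ∉ J} = ∅ := h
      show {k : W | g (n, k) = true} ∈ J
      by_contra hc
      have : n ∈ {n : ℕ | {k : W | g (n, k) = true} ∉ J} := hc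
      rw [h2] at this
      exact this
    · intro h
      show {n : ℕ | {k : W | g (n, k) = true} ∉ J} ∈ ({∅} : Set (Set ℕ))
      rw [mem_singleton_iff]
      exact eq_empty_iff_forall_notMem.2 fun n hn => hn (h n)
  rw [he]
  exact pcIInterSigma (n := c+1) _ fun n => scPreimage (hrescont n) hJ

end Chi


/-! ### family equalities and main assembly -/

section Family
variable {X : Type*} [TopologicalSpace X] [PolishSpace X]

lemma pc1_iff_closed {s : Set X} : s ∈ PiClass X 1 ↔ IsClosed s := by
  rw [memPiClass]
  exact ⟨fun h => isOpen_compl_iff.1 h, fun h => h.isOpen_compl⟩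

lemma limitFamily_fin : LimitFamily ℕ X (FinIdeal ℕ) = PiClass X 1 := by
  ext S
  constructor
  · rintro (⟨x, rfl⟩ | hS)
    · exact pc1_iff_closed.2 (lambdaSet_fin_closed x)
    · rw [mem_singleton_iff.1 hS]
      exact pc1_iff_closed.2 isClosed_empty
  · intro hS
    rcases eq_empty_or_nonempty S with rfl | hne
    · exact Or.inr rfl
    · obtain ⟨x, hx⟩ := closed_realizable (pc1_iff_closed.1 hS) hne
      exact Or.inl ⟨x, hx.symm⟩

lemma limitFamily_step {Z : Type*} (J : Set (Set Z))
    (hJsub : ∀ A B : Set Z, A ⊆ B → B ∈ J → A ∈ J)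
    (hJun : ∀ A B : Set Z, A ∈ J → B ∈ J → A ∪ B ∈ J)
    (hJfin : ∀ s : Set Z, s.Finite → s ∈ J) (c : ℕ)
    (hIH : LimitFamily Z X J = PiClass X (c+1)) :
    LimitFamily (ℕ × Z) X (FubiniProd (FinIdeal ℕ) J) = PiClass X (c+3) := by
  letI := TopologicalSpace.upgradeIsCompletelyMetrizable X
  ext S
  constructor
  · rintro (⟨x, rfl⟩ | hS)
    · rw [lambdaSet_finProd J hJsub hJun hJfin x]
      refine limsupSet_pc _ fun n => ?_
      rw [← hIH]
      exact Or.inl ⟨fun k => x (n, k), rfl⟩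
    · rw [mem_singleton_iff.1 hS]
      exact pcEmpty (c+2)
  · intro hS
    rcases eq_empty_or_nonempty S with rfl | ⟨p, hp⟩
    · exact Or.inr rfl
    · obtain ⟨F, hF, hSls⟩ := pc_eq_limsup hS
      set F' : ℕ → Set X := fun n => F n ∪ {p} with hF'
      have hF'pc : ∀ n, F' n ∈ PiClass X (c+1) := fun n =>
        pcUnion2 (hF n) (pcOfClosed c isClosed_singleton)
      have hF'wit : ∀ n, ∃ y : Z → X, F' n = LambdaSet y J := by
        intro n
        have hmem : F' n ∈ LimitFamily Z X J := by rw [hIH]; exact hF'pc n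
        rcases hmem with (⟨y, hy⟩ | h0)
        · exact ⟨y, hy⟩
        · exfalso
          have hpF : p ∈ F' n := mem_union_right _ rfl
          rw [mem_singleton_iff.1 h0] at hpF
          exact hpF
      choose y hy using hF'wit
      have hlim : limsupSet F' = S := by
        rw [hSls]
        ext η
        constructor
        · intro hη
          by_cases hp' : η = p
          · have hp2 : p ∈ limsupSet F := hSls ▸ hp
            rw [hp']
            exact hp2
          · have hset : {n | η ∈ F' n} = {n | η ∈ F n} := by
              ext n
              simp only [hF', mem_union, mem_singleton_iff, mem_setOf_eq]
              exact ⟨fun h => h.resolve_right hp', Or.inl⟩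
            have hη' : {n | η ∈ F' n}.Infinite := hη
            rw [hset] at hη'
            exact hη'
        · intro hη
          exact Set.Infinite.mono (fun n hn => (Or.inl hn : η ∈ F' n)) hη
      refine Or.inl ⟨fun q => y q.1 q.2, ?_⟩
      rw [lambdaSet_finProd J hJsub hJun hJfin]
      have hrows : (fun n => LambdaSet (fun k => (fun q : ℕ × Z => y q.1 q.2) (n, k)) J) = F' := by
        funext n
        show LambdaSet (y n) J = F' n
        exact (hy n).symm
      rw [hrows, hlim]

lemma limitFamily_emptyStep {Z : Type*} (J : Set (Set Z))
    (hJfin : ∀ s : Set Z, s.Finite → s ∈ J) (c : ℕ)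
    (hIH : LimitFamily Z X J = PiClass X (c+1)) :
    LimitFamily (ℕ × Z) X (FubiniProd ({∅} : Set (Set ℕ)) J) = SigmaClass X (c+2) := by
  letI := TopologicalSpace.upgradeIsCompletelyMetrizable X
  ext S
  constructor
  · rintro (⟨x, rfl⟩ | hS)
    · rw [lambdaSet_emptyProd J hJfin x]
      refine scIUnionPi _ fun n => ?_
      rw [← hIH]
      exact Or.inl ⟨fun k => x (n, k), rfl⟩
    · rw [mem_singleton_iff.1 hS]
      exact scEmpty (c+1)
  · intro hS
    rcases eq_empty_or_nonempty S with rfl | ⟨p, hp⟩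
    · exact Or.inr rfl
    · obtain ⟨f, hfpc, hSeq⟩ := memSigmaTwo.1 hS
      set F' : ℕ → Set X := fun n => f n ∪ {p} with hF'
      have hF'pc : ∀ n, F' n ∈ PiClass X (c+1) := fun n =>
        pcUnion2 (hfpc n) (pcOfClosed c isClosed_singleton)
      have hF'wit : ∀ n, ∃ y : Z → X, F' n = LambdaSet y J := by
        intro n
        have hmem : F' n ∈ LimitFamily Z X J := by rw [hIH]; exact hF'pc n
        rcases hmem with (⟨y, hy⟩ | h0)
        · exact ⟨y, hy⟩
        · exfalso
          have hpF : p ∈ F' n := mem_union_right _ rfl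
          rw [mem_singleton_iff.1 h0] at hpF
          exact hpF
      choose y hy using hF'wit
      refine Or.inl ⟨fun q => y q.1 q.2, ?_⟩
      rw [lambdaSet_emptyProd J hJfin]
      have hrows : (⋃ n, LambdaSet (fun k => (fun q : ℕ × Z => y q.1 q.2) (n, k)) J) = ⋃ n, F' n := by
        refine iUnion_congr fun n => ?_
        show LambdaSet (y n) J = F' n
        exact (hy n).symm
      rw [hrows]
      have hU : (⋃ n, F' n) = (⋃ n, f n) ∪ {p} := by
        rw [hF']
        rw [iUnion_union_distrib]
        congr 1
        exact iUnion_const {p}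
      rw [hU, ← hSeq]
      exact (union_eq_self_of_subset_right (by simpa using hp)).symm

lemma main_family : ∀ β : ℕ, LimitFamily (IterProd β) X (FinPow β) = PiClass X (2*β+1)
  | 0 => limitFamily_fin
  | (β+1) => by
    have hIH := main_family β
    exact limitFamily_step (FinPow β) (fun A B h1 h2 => finPow_subset_mem β h1 h2)
      (fun A B h1 h2 => finPow_union_mem β h1 h2) (fun s hs => finPow_finite_mem β hs)
      (2*β) hIH

end Family

lemma main_chi : ∀ β : ℕ, chiSet (FinPow β) ∈ SigmaClass (IterProd β → Bool) (2*β+2)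
  | 0 => chiSet_finIdeal_sigma2
  | (β+1) => chiSet_fubiniFin (FinPow β) (2*β) (main_chi β)


/-- for every positive integer `α` (written `α = β + 1`):
`Fin^α` is `Σ⁰_{2α}` and `𝓛_X(Fin^α) = Π⁰_{2α-1}(X)`; the ideal `∅×Fin^α` is `Π⁰_{2α+1}`
and `𝓛_X(∅×Fin^α) = Σ⁰_{2α}(X)`. -/
theorem stmt3 {X : Type*} [TopologicalSpace X] [PolishSpace X] (β : ℕ) :
    chiSet (FinPow β) ∈ SigmaClass (IterProd β → Bool) (2 * β + 2) ∧
    LimitFamily (IterProd β) X (FinPow β) = PiClass X (2 * β + 1) ∧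
    chiSet (FubiniProd ({∅} : Set (Set ℕ)) (FinPow β)) ∈
      PiClass ((ℕ × IterProd β) → Bool) (2 * β + 3) ∧
    LimitFamily (ℕ × IterProd β) X (FubiniProd ({∅} : Set (Set ℕ)) (FinPow β)) =
      SigmaClass X (2 * β + 2) := by
  refine ⟨main_chi β, main_family β, ?_, ?_⟩
  · exact chiSet_fubiniEmpty (FinPow β) (2*β) (main_chi β)
  · exact limitFamily_emptyStep (FinPow β) (fun s hs => finPow_finite_mem β hs) (2*β)
      (main_family β)
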